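/- Let B be a nonzero n×(n−1) real matrix whose nonzero columns are linearly independent, and let b ∈ ℝⁿ with b ∉ Range(B). Then the symmetric matrix A := BBᵀ − bbᵀ has at least one positive eigenvalue and exactly one negative eigenvalue. -/

import Mathlib

open Matrix

lemma aux_dot_inner (m : ℕ) (x y : EuclideanSpace ℝ (Fin m)) :
    x ⬝ᵥ y = inner (𝕜 := ℝ) x y := by
  simp [PiLp.inner_apply, RCLike.inner_apply, starRingEnd_apply, dotProduct]
  exact Finset.sum_congr rfl fun i _ => mul_comm _ _

lemma aux_quad (m k : ℕ) (B : Matrix (Fin m) (Fin k) ℝ) (b x : Fin m → ℝ) :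
    x ⬝ᵥ ((B * B.transpose - vecMulVec b b) *ᵥ x)
      = (Bᵀ *ᵥ x) ⬝ᵥ (Bᵀ *ᵥ x) - (b ⬝ᵥ x) * (b ⬝ᵥ x) := by
  have h1 : (B * Bᵀ - vecMulVec b b) *ᵥ x = B *ᵥ (Bᵀ *ᵥ x) - (b ⬝ᵥ x) • b := by
    rw [sub_mulVec, mulVec_mulVec]
    congr 1
    ext i
    simp only [vecMulVec_apply, mulVec, dotProduct, Pi.smul_apply, smul_eq_mul,
      Finset.sum_mul, Finset.mul_sum]
    exact Finset.sum_congr rfl fun j _ => by ring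
  rw [h1, dotProduct_sub, dotProduct_smul, dotProduct_mulVec, mulVec_transpose, smul_eq_mul,
    dotProduct_comm x b]

lemma aux_expand (m : ℕ) (A : Matrix (Fin m) (Fin m) ℝ) (hA : A.IsHermitian) (x : Fin m → ℝ) :
    x ⬝ᵥ (A *ᵥ x)
      = ∑ i, hA.eigenvalues i *
          ((star (hA.eigenvectorUnitary : Matrix (Fin m) (Fin m) ℝ) *ᵥ x) i)^2 := by
  set U := (hA.eigenvectorUnitary : Matrix (Fin m) (Fin m) ℝ) with hU
  have hsU : star U = Uᵀ := by
    rw [star_eq_conjTranspose, conjTranspose]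
    ext i j; simp
  conv_lhs => rw [hA.spectral_theorem, Unitary.conjStarAlgAut_apply, mul_assoc]
  rw [← mulVec_mulVec, dotProduct_mulVec, ← mulVec_transpose U x, ← hsU, ← mulVec_mulVec]
  set y := star U *ᵥ x
  simp only [dotProduct, mulVec_diagonal, Function.comp_apply, RCLike.ofReal_real_eq_id, id_eq]
  exact Finset.sum_congr rfl fun j _ => by ring

lemma aux_exists_w (m k : ℕ) (B : Matrix (Fin m) (Fin k) ℝ) (b : Fin m → ℝ)
    (hb : ¬ ∃ y : Fin k → ℝ, B.mulVec y = b) :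
    ∃ w : Fin m → ℝ, Bᵀ *ᵥ w = 0 ∧ b ⬝ᵥ w ≠ 0 := by
  classical
  let colE : Fin k → EuclideanSpace ℝ (Fin m) := fun j => WithLp.toLp 2 (Bᵀ j)
  let bE : EuclideanSpace ℝ (Fin m) := WithLp.toLp 2 b
  let V : Submodule ℝ (EuclideanSpace ℝ (Fin m)) := Submodule.span ℝ (Set.range colE)
  have hbV : bE ∉ V := by
    intro hmem
    apply hb
    have : b ∈ LinearMap.range (B.mulVecLin) := by
      rw [Matrix.range_mulVecLin]
      have := Submodule.mem_map_of_mem (f := (WithLp.linearEquiv 2 ℝ (Fin m → ℝ)).toLinearMap) hmem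
      rw [Submodule.map_span, ← Set.range_comp] at this
      exact this
    obtain ⟨y, hy⟩ := this
    exact ⟨y, hy⟩
  set w : EuclideanSpace ℝ (Fin m) := bE - (Submodule.orthogonalProjectionOnto V bE : EuclideanSpace ℝ (Fin m))
    with hw
  have hworth : w ∈ Vᗮ := V.sub_starProjection_mem_orthogonal bE
  have hcol : ∀ j, colE j ∈ V := fun j => Submodule.subset_span ⟨j, rfl⟩
  have hBw : Bᵀ *ᵥ (w : Fin m → ℝ) = 0 := by
    ext j
    have h0 : inner (𝕜 := ℝ) (colE j) w = 0 :=
      (Submodule.mem_orthogonal V w).mp hworth _ (hcol j)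
    rw [← aux_dot_inner] at h0
    simpa [colE, mulVec, dotProduct] using h0
  have hw0 : w ≠ 0 := by
    intro h
    apply hbV
    have hbe : bE = (Submodule.orthogonalProjectionOnto V bE : EuclideanSpace ℝ (Fin m)) :=
      sub_eq_zero.mp (hw ▸ h)
    rw [hbe]
    exact (Submodule.orthogonalProjectionOnto V bE).2
  have hbw : b ⬝ᵥ (w : Fin m → ℝ) = inner (𝕜 := ℝ) w w := by
    have h1 : inner (𝕜 := ℝ) bE w
        = inner (𝕜 := ℝ) ((Submodule.orthogonalProjectionOnto V bE : EuclideanSpace ℝ (Fin m)) + w) w := by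
      congr 1
      rw [hw]; abel
    have h2 : inner (𝕜 := ℝ) ((Submodule.orthogonalProjectionOnto V bE : EuclideanSpace ℝ (Fin m))) w = 0 :=
      (Submodule.mem_orthogonal V w).mp hworth _ (Submodule.orthogonalProjectionOnto V bE).2
    have h3 : b ⬝ᵥ (w : Fin m → ℝ) = inner (𝕜 := ℝ) bE w := aux_dot_inner m bE w
    rw [h3, h1, inner_add_left, h2, zero_add]
  refine ⟨w, hBw, ?_⟩
  rw [hbw]
  exact inner_self_ne_zero.mpr hw0

theorem stmt_1 (n : ℕ) (B : Matrix (Fin (n+1)) (Fin n) ℝ) (b : Fin (n+1) → ℝ)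
    (hB0 : B ≠ 0)
    (hB : LinearIndependent ℝ
      (fun j : {j : Fin n // B.transpose j ≠ 0} => B.transpose (j : Fin n)))
    (hb : ¬ ∃ y : Fin n → ℝ, B.mulVec y = b)
    (hA : (B * B.transpose - vecMulVec b b).IsHermitian) :
    0 < (Finset.univ.filter fun i => 0 < hA.eigenvalues i).card ∧
      (Finset.univ.filter fun i => hA.eigenvalues i < 0).card = 1 := by
  classical
  set A := B * B.transpose - vecMulVec b b with hAdef
  have selfnn : ∀ {k : ℕ} (v : Fin k → ℝ), 0 ≤ v ⬝ᵥ v :=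
    fun v => Finset.sum_nonneg fun i _ => mul_self_nonneg _
  -- the witness w with Bᵀw = 0, b·w ≠ 0
  obtain ⟨w, hBw, hbw⟩ := aux_exists_w (n+1) n B b hb
  have hqw : w ⬝ᵥ (A *ᵥ w) < 0 := by
    rw [hAdef, aux_quad, hBw]
    simp only [zero_dotProduct, zero_sub]
    nlinarith [mul_self_pos.mpr hbw]
  -- a nonzero column
  have hcolex : ∃ j0 : Fin n, Bᵀ j0 ≠ 0 := by
    by_contra h
    push_neg at h
    apply hB0
    ext i j
    have := congrFun (h j) i
    simpa using this
  obtain ⟨j0, hj0⟩ := hcolex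
  -- the witness u with q(u) > 0
  set u : Fin (n+1) → ℝ := Bᵀ j0 - ((b ⬝ᵥ Bᵀ j0) / (b ⬝ᵥ w)) • w with hu
  have hBu : Bᵀ *ᵥ u = Bᵀ *ᵥ (Bᵀ j0) := by
    rw [hu, mulVec_sub, mulVec_smul, hBw, smul_zero, sub_zero]
  have hbu : b ⬝ᵥ u = 0 := by
    rw [hu, dotProduct_sub, dotProduct_smul, smul_eq_mul, div_mul_cancel₀ _ hbw, sub_self]
  have hqu : 0 < u ⬝ᵥ (A *ᵥ u) := by
    rw [hAdef, aux_quad, hBu, hbu, mul_zero, sub_zero]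
    refine (selfnn _).lt_of_ne fun h => ?_
    have hv : Bᵀ *ᵥ (Bᵀ j0) = 0 := dotProduct_self_eq_zero.mp h.symm
    have he : (Bᵀ *ᵥ (Bᵀ j0)) j0 = (Bᵀ j0) ⬝ᵥ (Bᵀ j0) := rfl
    rw [hv] at he
    exact hj0 (dotProduct_self_eq_zero.mp he.symm)
  -- existence of a negative eigenvalue
  have hneg : ∃ i, hA.eigenvalues i < 0 := by
    by_contra h
    push_neg at h
    have h0 : 0 ≤ w ⬝ᵥ (A *ᵥ w) := by
      rw [aux_expand (n+1) A hA w]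
      exact Finset.sum_nonneg fun i _ => mul_nonneg (h i) (sq_nonneg _)
    linarith
  -- existence of a positive eigenvalue
  have hpos : ∃ i, 0 < hA.eigenvalues i := by
    by_contra h
    push_neg at h
    have h0 : u ⬝ᵥ (A *ᵥ u) ≤ 0 := by
      rw [aux_expand (n+1) A hA u]
      exact Finset.sum_nonpos fun i _ => mul_nonpos_of_nonpos_of_nonneg (h i) (sq_nonneg _)
    linarith
  -- at most one negative eigenvalue
  have huniq : ∀ i j, hA.eigenvalues i < 0 → hA.eigenvalues j < 0 → i = j := by
    intro i j hi hj
    by_contra hij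
    have dij : ∀ l l' : Fin (n+1),
        ⇑(hA.eigenvectorBasis l) ⬝ᵥ ⇑(hA.eigenvectorBasis l') = if l = l' then (1:ℝ) else 0 := by
      intro l l'
      rw [aux_dot_inner]
      exact orthonormal_iff_ite.mp hA.eigenvectorBasis.orthonormal l l'
    have qcomb : ∀ α β : ℝ,
        (α • ⇑(hA.eigenvectorBasis i) + β • ⇑(hA.eigenvectorBasis j)) ⬝ᵥ
          (A *ᵥ (α • ⇑(hA.eigenvectorBasis i) + β • ⇑(hA.eigenvectorBasis j)))
        = α^2 * hA.eigenvalues i + β^2 * hA.eigenvalues j := by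
      intro α β
      rw [mulVec_add, mulVec_smul, mulVec_smul, hA.mulVec_eigenvectorBasis,
        hA.mulVec_eigenvectorBasis]
      simp only [add_dotProduct, dotProduct_add, smul_dotProduct, dotProduct_smul, smul_eq_mul]
      rw [dij i i, dij i j, dij j i, dij j j]
      simp [hij, Ne.symm hij]
      ring
    have bcomb : ∀ α β : ℝ,
        b ⬝ᵥ (α • ⇑(hA.eigenvectorBasis i) + β • ⇑(hA.eigenvectorBasis j))
        = α * (b ⬝ᵥ ⇑(hA.eigenvectorBasis i)) + β * (b ⬝ᵥ ⇑(hA.eigenvectorBasis j)) := by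
      intro α β
      simp [dotProduct_add, dotProduct_smul]
    have nonneg_of_borth : ∀ x : Fin (n+1) → ℝ, b ⬝ᵥ x = 0 → 0 ≤ x ⬝ᵥ (A *ᵥ x) := by
      intro x hx
      rw [hAdef, aux_quad, hx, mul_zero, sub_zero]
      exact selfnn _
    by_cases hc1 : b ⬝ᵥ ⇑(hA.eigenvectorBasis i) = 0
    · have h2 := nonneg_of_borth
        ((1:ℝ) • ⇑(hA.eigenvectorBasis i) + (0:ℝ) • ⇑(hA.eigenvectorBasis j))
        (by rw [bcomb, hc1]; ring)
      rw [qcomb 1 0] at h2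
      nlinarith
    · have h2 := nonneg_of_borth
        ((b ⬝ᵥ ⇑(hA.eigenvectorBasis j)) • ⇑(hA.eigenvectorBasis i) +
          (-(b ⬝ᵥ ⇑(hA.eigenvectorBasis i))) • ⇑(hA.eigenvectorBasis j))
        (by rw [bcomb]; ring)
      rw [qcomb _ _] at h2
      have hc1sq : 0 < (b ⬝ᵥ ⇑(hA.eigenvectorBasis i))^2 :=
        (sq_nonneg _).lt_of_ne (Ne.symm (pow_ne_zero 2 hc1))
      nlinarith [sq_nonneg (b ⬝ᵥ ⇑(hA.eigenvectorBasis j))]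
  constructor
  · obtain ⟨i1, hi1⟩ := hpos
    exact Finset.card_pos.mpr ⟨i1, Finset.mem_filter.mpr ⟨Finset.mem_univ _, hi1⟩⟩
  · obtain ⟨i0, hi0⟩ := hneg
    have h1 : 0 < (Finset.univ.filter fun i => hA.eigenvalues i < 0).card :=
      Finset.card_pos.mpr ⟨i0, Finset.mem_filter.mpr ⟨Finset.mem_univ _, hi0⟩⟩
    have h2 : (Finset.univ.filter fun i => hA.eigenvalues i < 0).card ≤ 1 :=
      Finset.card_le_one.mpr fun a ha b' hb' =>
        huniq a b' (Finset.mem_filter.mp ha).2 (Finset.mem_filter.mp hb').2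
    omega
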